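/- Let G be a finite graph and let f : ℝ → ℝ be a non-constant, odd, real-analytic, increasing function. Then every global solution x : [0, ∞) → ℝ^V of ẋ_i = Σ_{j ∈ N(i)} f(x_j − x_i) converges as t → ∞ to the equilibrium x* that is constant on each connected component K of G with value (Σ_{i ∈ K} x_i(0)) / |K|; in particular x_j(t) − x_i(t) → 0 for every edge {i,j}. Moreover the energy function E(x) = Σ_{(j,k) ∈ E} g(x_k − x_j), for g a primitive of f, is convex. -/

import Mathlib

open Filter

section AuxStmt9

variable {V : Type} [Fintype V] [DecidableEq V]

/-- Sum of an antisymmetric function over adjacent pairs within an adjacency-closed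
set of vertices vanishes. -/
lemma aux_pair_sum (G : SimpleGraph V)
    [DecidableRel G.Adj] (s : Finset V) (hs : ∀ i ∈ s, ∀ j, G.Adj i j → j ∈ s)
    (h : V → V → ℝ) (hanti : ∀ i j, G.Adj i j → h i j + h j i = 0) :
    ∑ i ∈ s, ∑ j ∈ G.neighborFinset i, h i j = 0 := by
  rw [Finset.sum_sigma' s (fun i => G.neighborFinset i) (fun i j => h i j)]
  refine Finset.sum_involution (fun p _ => ⟨p.2, p.1⟩) ?_ ?_ ?_ ?_
  · intro p hp
    rw [Finset.mem_sigma] at hp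
    exact hanti p.1 p.2 ((SimpleGraph.mem_neighborFinset _ _ _).1 hp.2)
  · intro p hp _
    rw [Finset.mem_sigma] at hp
    have hadj : G.Adj p.1 p.2 := (SimpleGraph.mem_neighborFinset _ _ _).1 hp.2
    intro heq
    have : p.2 = p.1 := congrArg Sigma.fst heq
    exact hadj.ne' this
  · intro p hp
    rw [Finset.mem_sigma] at hp ⊢
    have hadj : G.Adj p.1 p.2 := (SimpleGraph.mem_neighborFinset _ _ _).1 hp.2
    exact ⟨hs p.1 hp.1 p.2 hadj, (SimpleGraph.mem_neighborFinset _ _ _).2 hadj.symm⟩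
  · intro p hp
    rfl

lemma aux_antitone {L : ℝ → ℝ} {L' : ℝ → ℝ}
    (hL : ∀ t ∈ Set.Ici (0:ℝ), HasDerivWithinAt L (L' t) (Set.Ici 0) t)
    (hL' : ∀ t ∈ Set.Ici (0:ℝ), L' t ≤ 0) : AntitoneOn L (Set.Ici 0) := by
  apply antitoneOn_of_deriv_nonpos (convex_Ici 0)
  · exact fun t ht => (hL t ht).continuousWithinAt
  · intro t ht
    rw [interior_Ici] at ht
    exact ((hL t (Set.mem_Ici.2 (le_of_lt ht))).hasDerivAt (Ici_mem_nhds ht)).differentiableAt.differentiableWithinAt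
  · intro t ht
    rw [interior_Ici] at ht
    rw [((hL t (Set.mem_Ici.2 (le_of_lt ht))).hasDerivAt (Ici_mem_nhds ht)).deriv]
    exact hL' t (Set.mem_Ici.2 (le_of_lt ht))

lemma aux_convex (f g : ℝ → ℝ) (hmono : StrictMono f) (hg : ∀ t : ℝ, HasDerivAt g (f t) t)
    (Eo : Finset (V × V)) :
    ConvexOn ℝ Set.univ (fun y : V → ℝ => ∑ e ∈ Eo, g (y e.2 - y e.1)) := by
  have hgd : Differentiable ℝ g := fun t => (hg t).differentiableAt
  have hderiv : deriv g = f := funext fun t => (hg t).deriv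
  have hgc : ConvexOn ℝ Set.univ g :=
    (StrictMono.strictConvexOn_univ_of_deriv hgd.continuous (hderiv ▸ hmono)).convexOn
  have hterm : ∀ e : V × V, ConvexOn ℝ Set.univ (fun y : V → ℝ => g (y e.2 - y e.1)) := by
    intro e
    refine ⟨convex_univ, fun y _ z _ a b ha hb hab => ?_⟩
    have eq1 : (a • y + b • z) e.2 - (a • y + b • z) e.1
        = a • (y e.2 - y e.1) + b • (z e.2 - z e.1) := by
      simp only [Pi.add_apply, Pi.smul_apply, smul_eq_mul]; ring
    simp only []
    rw [show ((a • y + b • z) e.2 - (a • y + b • z) e.1) = a • (y e.2 - y e.1) + b • (z e.2 - z e.1) from eq1]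
    exact hgc.2 (Set.mem_univ _) (Set.mem_univ _) ha hb hab
  classical
  induction Eo using Finset.cons_induction with
  | empty => simpa using convexOn_const (0:ℝ) convex_univ
  | cons e s he ih =>
    have h := (hterm e).add ih
    simp only [Finset.sum_cons]
    exact h

end AuxStmt9

/-- `Eo` is a fixed orientation of the edges of `G`. -/
def IsOrientation {α : Type} (G : SimpleGraph α) (Eo : Finset (α × α)) : Prop :=
  (∀ e ∈ Eo, G.Adj e.1 e.2) ∧
  (∀ i j : α, G.Adj i j → ((i, j) ∈ Eo ∨ (j, i) ∈ Eo)) ∧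
  (∀ i j : α, (i, j) ∈ Eo → (j, i) ∉ Eo)

/-- For a non-constant odd real-analytic increasing `f`, every global
solution `x : [0,∞) → ℝ^V` of `ẋ_i = ∑_{j ∈ N(i)} f(x_j − x_i)` converges as
`t → ∞` to the equilibrium which on each connected component `K` is constant with
value `(∑_{i ∈ K} x_i(0)) / |K|`; in particular `x_j(t) − x_i(t) → 0` on every edge.
Moreover the energy `E(x) = ∑_{(j,k) ∈ E} g(x_k − x_j)` (for `g` a primitive of `f`)
is convex. -/
theorem stmt_9 {V : Type} [Fintype V] [DecidableEq V]
    (G : SimpleGraph V) [DecidableRel G.Adj] [DecidableEq G.ConnectedComponent]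
    (f : ℝ → ℝ) (hodd : ∀ t : ℝ, f (-t) = -f t)
    (hnc : ∃ a b : ℝ, f a ≠ f b) (han : ∀ t : ℝ, AnalyticAt ℝ f t)
    (hmono : StrictMono f)
    (g : ℝ → ℝ) (hg : ∀ t : ℝ, HasDerivAt g (f t) t)
    (Eo : Finset (V × V)) (hor : IsOrientation G Eo) :
    -- every global solution converges to the componentwise-average equilibrium
    (∀ x : ℝ → V → ℝ,
      (∀ (i : V), ∀ t ∈ Set.Ici (0 : ℝ), HasDerivWithinAt (fun s => x s i)
          (∑ j ∈ G.neighborFinset i, f (x t j - x t i)) (Set.Ici (0 : ℝ)) t) →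
      (∀ i : V, Tendsto (fun t => x t i) atTop
        (nhds ((∑ j ∈ Finset.univ.filter
              (fun j => G.connectedComponentMk j = G.connectedComponentMk i), x 0 j) /
            ((Finset.univ.filter
              (fun j => G.connectedComponentMk j = G.connectedComponentMk i)).card : ℝ)))) ∧
      (∀ i j : V, G.Adj i j →
        Tendsto (fun t => x t j - x t i) atTop (nhds (0 : ℝ)))) ∧
    -- the energy function is convex
    ConvexOn ℝ Set.univ (fun y : V → ℝ => ∑ e ∈ Eo, g (y e.2 - y e.1)) := by
  classical
  -- basic facts about f
  have hf0 : f 0 = 0 := by have := hodd 0; simp at this; linarith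
  have hfc : Continuous f := continuous_iff_continuousAt.2 fun t => (han t).continuousAt
  have hfpos : ∀ s : ℝ, 0 ≤ s * f s := by
    intro s
    rcases lt_trichotomy s 0 with h | h | h
    · have : f s < 0 := hf0 ▸ hmono h
      nlinarith
    · simp [h, hf0]
    · have : 0 < f s := hf0 ▸ hmono h
      nlinarith
  have hfzero : ∀ s : ℝ, s * f s = 0 → s = 0 := by
    intro s hs
    rcases lt_trichotomy s 0 with h | h | h
    · have : f s < 0 := hf0 ▸ hmono h
      nlinarith
    · exact h
    · have : 0 < f s := hf0 ▸ hmono h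
      nlinarith
  refine ⟨?_, aux_convex f g hmono hg Eo⟩
  intro x hx
  -- components
  set K : V → Finset V := fun i =>
    Finset.univ.filter (fun j => G.connectedComponentMk j = G.connectedComponentMk i) with hK
  have hmemK : ∀ i j : V, j ∈ K i ↔ G.connectedComponentMk j = G.connectedComponentMk i := by
    intro i j; simp [hK]
  have hselfK : ∀ i : V, i ∈ K i := fun i => (hmemK i i).2 rfl
  have hKeq : ∀ i j : V, G.connectedComponentMk j = G.connectedComponentMk i → K j = K i := by
    intro i j hij
    ext k; rw [hmemK, hmemK, hij]
  have hKadjeq : ∀ i j : V, G.Adj i j → K i = K j := by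
    intro i j hadj
    exact hKeq j i (SimpleGraph.ConnectedComponent.eq.2 hadj.reachable)
  have hKclosed : ∀ i : V, ∀ j ∈ K i, ∀ k, G.Adj j k → k ∈ K i := by
    intro i j hj k hjk
    rw [hmemK] at hj ⊢
    rw [← hj]
    exact SimpleGraph.ConnectedComponent.eq.2 hjk.symm.reachable
  have hKcard : ∀ i : V, 0 < ((K i).card : ℝ) := by
    intro i
    have : 0 < (K i).card := Finset.card_pos.2 ⟨i, hselfK i⟩
    exact_mod_cast this
  -- the target values
  set m : V → ℝ := fun i => (∑ j ∈ K i, x 0 j) / ((K i).card : ℝ) with hm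
  have hmeq : ∀ i j : V, G.Adj i j → m i = m j := by
    intro i j hadj; simp only [hm, hKadjeq i j hadj]
  -- conservation of component sums
  have hcons : ∀ i : V, ∀ t ∈ Set.Ici (0:ℝ), (∑ j ∈ K i, x t j) = ∑ j ∈ K i, x 0 j := by
    intro i t ht
    have hS : ∀ u ∈ Set.Ici (0:ℝ),
        HasDerivWithinAt (fun s => ∑ j ∈ K i, x s j) 0 (Set.Ici 0) u := by
      intro u hu
      have hsum := HasDerivWithinAt.fun_sum (fun j (_ : j ∈ K i) => hx j u hu)
      have hzero : (∑ j ∈ K i, ∑ k ∈ G.neighborFinset j, f (x u k - x u j)) = 0 := by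
        apply aux_pair_sum G (K i) (hKclosed i)
        intro a b hab
        have : x u a - x u b = -(x u b - x u a) := by ring
        rw [this, hodd]; ring
      rwa [hzero] at hsum
    have hcont : ContinuousOn (fun s => ∑ j ∈ K i, x s j) (Set.Icc 0 t) :=
      fun u hu => ((hS u hu.1).continuousWithinAt).mono Set.Icc_subset_Ici_self
    have hder : ∀ u ∈ Set.Ico (0:ℝ) t,
        HasDerivWithinAt (fun s => ∑ j ∈ K i, x s j) 0 (Set.Ici u) u :=
      fun u hu => (hS u hu.1).mono (Set.Ici_subset_Ici.2 hu.1)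
    exact constant_of_has_deriv_right_zero hcont hder t ⟨ht, le_refl t⟩
  -- Lyapunov function
  set W : (V → ℝ) → ℝ := fun y => ∑ i, (y i - m i)^2 with hW
  set Q : (V → ℝ) → ℝ := fun y => ∑ i, ∑ j ∈ G.neighborFinset i,
    (y j - y i) * f (y j - y i) with hQ
  have hQ0 : ∀ y, 0 ≤ Q y := by
    intro y
    apply Finset.sum_nonneg; intro i _
    apply Finset.sum_nonneg; intro j _
    exact hfpos _
  have hW0 : ∀ y, 0 ≤ W y := by
    intro y; apply Finset.sum_nonneg; intro i _; positivity
  -- derivative of W along the trajectory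
  have hLd : ∀ t ∈ Set.Ici (0:ℝ),
      HasDerivWithinAt (fun s => W (x s)) (-(Q (x t))) (Set.Ici 0) t := by
    intro t ht
    have hterm : ∀ i : V, HasDerivWithinAt (fun s => (x s i - m i)^2)
        ((2:ℕ) * (x t i - m i)^(2-1) * (∑ j ∈ G.neighborFinset i, f (x t j - x t i)))
        (Set.Ici 0) t := fun i => ((hx i t ht).sub_const (m i)).pow 2
    have hsum := HasDerivWithinAt.fun_sum (fun i (_ : i ∈ Finset.univ) => hterm i)
    have heq : (∑ i, (2:ℕ) * (x t i - m i)^(2-1) * (∑ j ∈ G.neighborFinset i, f (x t j - x t i)))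
        = -(Q (x t)) := by
      have hkey : (∑ i, ((2:ℕ) * (x t i - m i)^(2-1) *
          (∑ j ∈ G.neighborFinset i, f (x t j - x t i)))) + Q (x t)
          = ∑ i, ∑ j ∈ G.neighborFinset i,
              (x t i + x t j - 2 * m i) * f (x t j - x t i) := by
        rw [hQ, ← Finset.sum_add_distrib]
        apply Finset.sum_congr rfl
        intro i _
        rw [Finset.mul_sum, ← Finset.sum_add_distrib]
        apply Finset.sum_congr rfl
        intro j _
        push_cast
        ring
      have hzero : (∑ i, ∑ j ∈ G.neighborFinset i,
          (x t i + x t j - 2 * m i) * f (x t j - x t i)) = 0 := by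
        apply aux_pair_sum G Finset.univ (fun _ _ _ _ => Finset.mem_univ _)
        intro a b hab
        have h1 : x t a - x t b = -(x t b - x t a) := by ring
        rw [h1, hodd, hmeq a b hab]
        ring
      have := hkey.trans hzero
      linarith
    rw [heq] at hsum
    exact hsum
  -- W is antitone along the trajectory
  have hLanti : AntitoneOn (fun s => W (x s)) (Set.Ici 0) :=
    aux_antitone hLd (fun t _ => by simpa using hQ0 (x t))
  -- key claim : W (x t) gets below any ε
  have hkey : ∀ ε : ℝ, 0 < ε → ∃ t0 : ℝ, 0 ≤ t0 ∧ W (x t0) < ε := by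
    intro ε hε
    by_contra hcon
    push_neg at hcon
    have hεL : ∀ t : ℝ, 0 ≤ t → ε ≤ W (x t) := fun t ht => hcon t ht
    -- the compact set
    set A : Set (V → ℝ) := {y | (∀ i, ∑ j ∈ K i, y j = ∑ j ∈ K i, x 0 j) ∧
        ε ≤ W y ∧ W y ≤ W (x 0)} with hA
    have hmemA : ∀ t : ℝ, 0 ≤ t → x t ∈ A := by
      intro t ht
      refine ⟨fun i => hcons i t ht, hεL t ht, ?_⟩
      exact hLanti (Set.self_mem_Ici) ht ht
    have hWcont : Continuous W := by
      apply continuous_finset_sum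
      intro i _
      exact ((continuous_apply i).sub continuous_const).pow 2
    have hQcont : Continuous Q := by
      apply continuous_finset_sum
      intro i _
      apply continuous_finset_sum
      intro j _
      exact ((continuous_apply j).sub (continuous_apply i)).mul
        (hfc.comp ((continuous_apply j).sub (continuous_apply i)))
    have hclosed : IsClosed A := by
      have h1 : IsClosed {y : V → ℝ | ∀ i, ∑ j ∈ K i, y j = ∑ j ∈ K i, x 0 j} := by
        rw [Set.setOf_forall]
        apply isClosed_iInter
        intro i
        exact isClosed_eq (continuous_finset_sum _ fun j _ => continuous_apply j)
          continuous_const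
      have h2 : IsClosed {y : V → ℝ | ε ≤ W y} := isClosed_le continuous_const hWcont
      have h3 : IsClosed {y : V → ℝ | W y ≤ W (x 0)} := isClosed_le hWcont continuous_const
      have hAeq : A = {y : V → ℝ | ∀ i, ∑ j ∈ K i, y j = ∑ j ∈ K i, x 0 j} ∩
          ({y : V → ℝ | ε ≤ W y} ∩ {y : V → ℝ | W y ≤ W (x 0)}) := by
        ext y; simp [hA, Set.mem_setOf_eq, and_assoc]
      rw [hAeq]
      exact h1.inter (h2.inter h3)
    have hbdd : Bornology.IsBounded A := by
      rw [isBounded_iff_forall_norm_le]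
      refine ⟨‖m‖ + Real.sqrt (W (x 0)), ?_⟩
      intro y hy
      rw [pi_norm_le_iff_of_nonneg (by positivity)]
      intro i
      have h1 : (y i - m i)^2 ≤ W y := by
        apply Finset.single_le_sum (f := fun i => (y i - m i)^2)
          (fun j _ => by positivity) (Finset.mem_univ i)
      have h2 : |y i - m i| ≤ Real.sqrt (W (x 0)) := by
        rw [← Real.sqrt_sq_eq_abs]
        exact Real.sqrt_le_sqrt (h1.trans hy.2.2)
      have h3 : |m i| ≤ ‖m‖ := by
        rw [← Real.norm_eq_abs]
        exact norm_le_pi_norm m i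
      calc ‖y i‖ = |y i - m i + m i| := by rw [Real.norm_eq_abs]; ring_nf
        _ ≤ |y i - m i| + |m i| := abs_add_le _ _
        _ ≤ Real.sqrt (W (x 0)) + ‖m‖ := add_le_add h2 h3
        _ = ‖m‖ + Real.sqrt (W (x 0)) := by ring
    have hcomp : IsCompact A := Metric.isCompact_of_isClosed_isBounded hclosed hbdd
    obtain ⟨y0, hy0A, hy0min⟩ := hcomp.exists_isMinOn ⟨x 0, hmemA 0 le_rfl⟩
      hQcont.continuousOn
    set δ : ℝ := Q y0 with hδ
    have hδpos : 0 < δ := by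
      rcases lt_or_eq_of_le (hQ0 y0) with h | h
      · exact h
      · exfalso
        -- Q y0 = 0 forces y0 to be constant on components, equal to m, so W y0 = 0 < ε
        have hzero : ∀ i : V, ∀ j ∈ G.neighborFinset i, (y0 j - y0 i) * f (y0 j - y0 i) = 0 := by
          intro i
          have houter := (Finset.sum_eq_zero_iff_of_nonneg
            (fun i _ => Finset.sum_nonneg (fun j _ => hfpos _))).1 h.symm
          exact (Finset.sum_eq_zero_iff_of_nonneg
            (fun j _ => hfpos _)).1 (houter i (Finset.mem_univ i))
        have hadjd : ∀ i j : V, G.Adj i j → y0 j = y0 i := by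
          intro i j hadj
          have := hzero i j ((SimpleGraph.mem_neighborFinset _ _ _).2 hadj)
          have := hfzero _ this
          linarith
        have hreach : ∀ i j : V, G.Reachable i j → y0 i = y0 j := by
          intro i j hr
          obtain ⟨w⟩ := hr
          induction w with
          | nil => rfl
          | cons hupv p ih => rw [← ih, hadjd _ _ hupv]
        have hy0const : ∀ i : V, ∀ j ∈ K i, y0 j = y0 i := by
          intro i j hj
          rw [hmemK] at hj
          exact hreach j i (SimpleGraph.ConnectedComponent.eq.1 hj)
        have hy0m : ∀ i : V, y0 i = m i := by
          intro i
          have hsum : ((K i).card : ℝ) * y0 i = ∑ j ∈ K i, x 0 j := by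
            rw [← hy0A.1 i, Finset.sum_congr rfl (fun j hj => hy0const i j hj),
              Finset.sum_const, nsmul_eq_mul]
          have hcard := hKcard i
          show y0 i = (∑ j ∈ K i, x 0 j) / ((K i).card : ℝ)
          rw [eq_div_iff (ne_of_gt hcard), ← hsum]
          ring
        have hWy0 : W y0 = 0 := by
          rw [hW]
          apply Finset.sum_eq_zero
          intro i _
          rw [hy0m i]
          ring
        have := hy0A.2.1
        rw [hWy0] at this
        linarith
    -- derivative bound gives linear decay, contradiction
    have hlin : ∀ t : ℝ, 0 ≤ t → W (x t) + δ * t ≤ W (x 0) := by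
      have hanti2 : AntitoneOn (fun s => W (x s) + δ * s) (Set.Ici 0) := by
        apply aux_antitone (L' := fun t => -(Q (x t)) + δ)
        · intro t ht
          exact (hLd t ht).add ((hasDerivWithinAt_id t _).const_mul δ |>.congr_deriv (by ring))
        · intro t ht
          have : δ ≤ Q (x t) := hy0min (hmemA t ht)
          linarith
      intro t ht
      have := hanti2 Set.self_mem_Ici ht ht
      simpa using this
    have hbad := hlin (W (x 0) / δ + 1) (by positivity)
    have h1 : 0 ≤ W (x (W (x 0) / δ + 1)) := hW0 _
    have h2 : δ * (W (x 0) / δ + 1) = W (x 0) + δ := by field_simp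
    nlinarith
  -- convergence of W (x t) to 0
  have hWlim : Tendsto (fun t => W (x t)) atTop (nhds 0) := by
    rw [Metric.tendsto_atTop]
    intro ε hε
    obtain ⟨t0, ht0, ht0'⟩ := hkey ε hε
    refine ⟨t0, fun t ht => ?_⟩
    have htt : (0:ℝ) ≤ t := le_trans ht0 ht
    have hmono2 := hLanti (Set.mem_Ici.2 ht0) (Set.mem_Ici.2 htt) ht
    rw [Real.dist_eq, sub_zero, abs_of_nonneg (hW0 (x t))]
    linarith
  -- coordinatewise convergence
  have hcoord : ∀ i : V, Tendsto (fun t => x t i) atTop (nhds (m i)) := by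
    intro i
    have hsq : Tendsto (fun t => (x t i - m i)^2) atTop (nhds 0) := by
      apply tendsto_of_tendsto_of_tendsto_of_le_of_le tendsto_const_nhds hWlim
      · intro t; positivity
      · intro t
        exact Finset.single_le_sum (f := fun j => (x t j - m j)^2)
          (fun j _ => by positivity) (Finset.mem_univ i)
    have habs : Tendsto (fun t => |x t i - m i|) atTop (nhds 0) := by
      have h2 := (Real.continuous_sqrt.tendsto 0).comp hsq
      simp only [Function.comp_def, Real.sqrt_sq_eq_abs, Real.sqrt_zero] at h2
      exact h2
    have hdiff : Tendsto (fun t => x t i - m i) atTop (nhds 0) :=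
      (tendsto_zero_iff_abs_tendsto_zero _).2 habs
    have h3 := hdiff.add (tendsto_const_nhds : Tendsto (fun _ : ℝ => m i) atTop (nhds (m i)))
    simpa using h3
  constructor
  · intro i
    exact hcoord i
  · intro i j hadj
    have := (hcoord j).sub (hcoord i)
    rw [hmeq i j hadj] at this
    simpa using this
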